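/- Let w ∈ ℝ^n satisfy w_1 ≥ w_2 ≥ ... ≥ w_n and w_i > 0 for all i. Then g_w is strictly monotone: if x, y ∈ ℝ^n satisfy x_i ≤ y_i for all i, then g_w(x) ≤ g_w(y), and if moreover x ≠ y then g_w(x) < g_w(y). -/

import Mathlib

/-- The nondecreasing rearrangement `x^↑` of a vector `x ∈ ℝ^n`. -/
noncomputable def sortedAsc {n : ℕ} (x : Fin n → ℝ) : Fin n → ℝ := x ∘ Tuple.sort x

/-- The generalized Gini welfare function `g_w(x) = Σ_i w_i x^↑_i`. -/
noncomputable def ggf {n : ℕ} (w x : Fin n → ℝ) : ℝ := ∑ i, w i * sortedAsc x i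

lemma card_sortedAsc_le {n : ℕ} (x : Fin n → ℝ) (a : ℝ) :
    Fintype.card {i // sortedAsc x i ≤ a} = Fintype.card {i // x i ≤ a} :=
  Fintype.card_congr (Equiv.subtypeEquiv (Tuple.sort x) (fun i => Iff.rfl))

lemma sortedAsc_le_sortedAsc {n : ℕ} {x y : Fin n → ℝ} (hxy : ∀ i, x i ≤ y i) (k : Fin n) :
    sortedAsc x k ≤ sortedAsc y k := by
  rw [← Tuple.lt_card_le_iff_apply_le_of_monotone (f := sortedAsc x) (j := k) (Tuple.monotone_sort x), ← Fintype.card_subtype]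
  have h1 : (k : ℕ) < Fintype.card {i // sortedAsc y i ≤ sortedAsc y k} := by
    rw [Fintype.card_subtype, Tuple.lt_card_le_iff_apply_le_of_monotone (f := sortedAsc y) (j := k) (Tuple.monotone_sort y)]
  refine lt_of_lt_of_le h1 ?_
  rw [card_sortedAsc_le, card_sortedAsc_le]
  exact Fintype.card_le_of_embedding (Subtype.impEmbedding _ _ (fun i h => (hxy i).trans h))

lemma sum_sortedAsc {n : ℕ} (x : Fin n → ℝ) : ∑ i, sortedAsc x i = ∑ i, x i :=
  Equiv.sum_comp (Tuple.sort x) x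

/-- If `w_1 ≥ ... ≥ w_n` and `w_i > 0` for all `i`, then `g_w` is strictly monotone:
if `x_i ≤ y_i` for all `i`, then `g_w(x) ≤ g_w(y)`, with strict inequality when `x ≠ y`. -/
theorem ggf_strictly_monotone {n : ℕ} (w : Fin n → ℝ) (hw : Antitone w) (hw0 : ∀ i, 0 < w i)
    (x y : Fin n → ℝ) (hxy : ∀ i, x i ≤ y i) :
    ggf w x ≤ ggf w y ∧ (x ≠ y → ggf w x < ggf w y) := by
  have hs := sortedAsc_le_sortedAsc hxy
  constructor
  · exact Finset.sum_le_sum fun i _ =>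
      mul_le_mul_of_nonneg_left (hs i) (hw0 i).le
  · intro hne
    have hsum : ∑ i, sortedAsc x i < ∑ i, sortedAsc y i := by
      rw [sum_sortedAsc, sum_sortedAsc]
      obtain ⟨i, hi⟩ : ∃ i, x i ≠ y i := Function.ne_iff.mp hne
      exact Finset.sum_lt_sum (fun j _ => hxy j) ⟨i, Finset.mem_univ i, lt_of_le_of_ne (hxy i) hi⟩
    obtain ⟨k, -, hk⟩ : ∃ k ∈ Finset.univ, sortedAsc x k < sortedAsc y k := by
      by_contra h
      push_neg at h
      exact absurd (le_antisymm (Finset.sum_le_sum fun i _ => hs i)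
        (Finset.sum_le_sum fun i _ => h i (Finset.mem_univ i))) hsum.ne
    exact Finset.sum_lt_sum (fun i _ => mul_le_mul_of_nonneg_left (hs i) (hw0 i).le)
      ⟨k, Finset.mem_univ k, mul_lt_mul_of_pos_left hk (hw0 k)⟩
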